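/- For every finite abelian group G and every natural number k ≥ 1, D_k(G) ≤ exp(G)·(k−1) + η(G). -/

import Mathlib

noncomputable def DavenportM (G : Type*) [AddCommGroup G] (m : ℕ) : ℕ :=
  sInf {t | ∀ S : Multiset G, t ≤ Multiset.card S →
    ∃ L : Multiset (Multiset G), Multiset.card L = m ∧
      (∀ T ∈ L, T ≠ 0 ∧ T.sum = 0) ∧ L.sum ≤ S}

/-- The Davenport constant: smallest `t` such that every sequence over `G` of length `≥ t`
has a non-empty zero-sum subsequence. -/
noncomputable def Davenport (G : Type*) [AddCommGroup G] : ℕ :=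
  sInf {t | ∀ S : Multiset G, t ≤ Multiset.card S → ∃ T ≤ S, T ≠ 0 ∧ T.sum = 0}

/-- `η(G)`: smallest `t` such that every sequence over `G` of length `≥ t` has a non-empty
zero-sum subsequence of length at most `exp G`. -/
noncomputable def etaC (G : Type*) [AddCommGroup G] : ℕ :=
  sInf {t | ∀ S : Multiset G, t ≤ Multiset.card S →
    ∃ T ≤ S, T ≠ 0 ∧ T.sum = 0 ∧ Multiset.card T ≤ AddMonoid.exponent G}

/-- The Erdős–Ginzburg–Ziv constant `s(G)`: smallest `t` such that every sequence over `G` of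
length `≥ t` has a zero-sum subsequence of length exactly `exp G`. -/
noncomputable def egz (G : Type*) [AddCommGroup G] : ℕ :=
  sInf {t | ∀ S : Multiset G, t ≤ Multiset.card S →
    ∃ T ≤ S, T.sum = 0 ∧ Multiset.card T = AddMonoid.exponent G}


private lemma eta_set_nonempty (G : Type*) [AddCommGroup G] [Fintype G] :
    (Fintype.card G * AddMonoid.exponent G) ∈ {t | ∀ S : Multiset G, t ≤ Multiset.card S →
      ∃ T ≤ S, T ≠ 0 ∧ T.sum = 0 ∧ Multiset.card T ≤ AddMonoid.exponent G} := by
  classical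
  intro S hS
  have hexp : 0 < AddMonoid.exponent G := Nat.pos_of_ne_zero AddMonoid.exponent_ne_zero_of_finite
  -- pigeonhole: some g appears ≥ exponent times
  have hpig : ∃ g : G, AddMonoid.exponent G ≤ S.count g := by
    by_contra h
    push_neg at h
    have h1 : Multiset.card S = ∑ a ∈ S.toFinset, S.count a := (Multiset.toFinset_sum_count_eq S).symm
    have h2 : ∑ a ∈ S.toFinset, S.count a ≤ ∑ a ∈ Finset.univ, S.count a :=
      Finset.sum_le_sum_of_subset (Finset.subset_univ _)
    have h3 : ∑ a ∈ (Finset.univ : Finset G), S.count a ≤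
        ∑ _a ∈ (Finset.univ : Finset G), (AddMonoid.exponent G - 1) :=
      Finset.sum_le_sum (fun a _ => by have := h a; omega)
    simp only [Finset.sum_const, smul_eq_mul, Finset.card_univ] at h3
    have hcard : 0 < Fintype.card G := Fintype.card_pos
    have : Fintype.card G * (AddMonoid.exponent G - 1) < Fintype.card G * AddMonoid.exponent G :=
      (Nat.mul_lt_mul_left hcard).mpr (by omega)
    omega
  obtain ⟨g, hg⟩ := hpig
  have hord : 0 < addOrderOf g := addOrderOf_pos g
  have hordle : addOrderOf g ≤ AddMonoid.exponent G :=
    Nat.le_of_dvd hexp (AddMonoid.addOrder_dvd_exponent g)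
  refine ⟨Multiset.replicate (addOrderOf g) g, ?_, ?_, ?_, ?_⟩
  · exact Multiset.le_count_iff_replicate_le.mp (le_trans hordle hg)
  · intro h
    have := congrArg Multiset.card h
    simp only [Multiset.card_replicate, Multiset.card_zero] at this
    omega
  · simp [Multiset.sum_replicate, addOrderOf_nsmul_eq_zero]
  · simpa using hordle

theorem stmt_1 (G : Type*) [AddCommGroup G] [Fintype G] (k : ℕ) (hk : 1 ≤ k) :
    DavenportM G k ≤ AddMonoid.exponent G * (k - 1) + etaC G := by
  classical
  have hexp : 0 < AddMonoid.exponent G := Nat.pos_of_ne_zero AddMonoid.exponent_ne_zero_of_finite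
  have heta : ∀ S : Multiset G, etaC G ≤ Multiset.card S →
      ∃ T ≤ S, T ≠ 0 ∧ T.sum = 0 ∧ Multiset.card T ≤ AddMonoid.exponent G :=
    Nat.sInf_mem ⟨_, eta_set_nonempty G⟩
  apply Nat.sInf_le
  induction k, hk using Nat.le_induction with
  | base =>
    intro S hS
    simp only [Nat.sub_self, mul_zero, zero_add] at hS
    obtain ⟨T, hTS, hT0, hTsum, _⟩ := heta S hS
    exact ⟨{T}, by simp, by simpa using ⟨hT0, hTsum⟩, by simpa using hTS⟩
  | succ k hk ih =>
    intro S hS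
    have hS' : AddMonoid.exponent G * k + etaC G ≤ Multiset.card S := by simpa using hS
    obtain ⟨T, hTS, hT0, hTsum, hTcard⟩ := heta S (by omega)
    have hcardsub : Multiset.card (S - T) = Multiset.card S - Multiset.card T :=
      Multiset.card_sub hTS
    have hmul : AddMonoid.exponent G * k = AddMonoid.exponent G * (k - 1) + AddMonoid.exponent G := by
      have : k - 1 + 1 = k := by omega
      calc AddMonoid.exponent G * k = AddMonoid.exponent G * (k - 1 + 1) := by rw [this]
        _ = _ := by ring
    have hTSle : Multiset.card T ≤ Multiset.card S := Multiset.card_le_card hTS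
    obtain ⟨L, hLcard, hLprop, hLsum⟩ := ih (S - T) (by omega)
    refine ⟨T ::ₘ L, by simp [hLcard], ?_, ?_⟩
    · intro T' hT'
      rcases Multiset.mem_cons.mp hT' with rfl | h
      · exact ⟨hT0, hTsum⟩
      · exact hLprop T' h
    · rw [Multiset.sum_cons]
      exact (le_tsub_iff_left hTS).mp hLsum
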